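/- Let c > 1. There exists γ* > 0 such that for every 0 < γ < γ*, the function z ↦ c·ψ(z + γ) − ψ(z) on (0,∞) attains its infimum, and it is attained precisely at the point z*_{c,γ}; that is, inf_{z>0} [c·ψ(z + γ) − ψ(z)] = c·ψ(z*_{c,γ} + γ) − ψ(z*_{c,γ}). -/

import Mathlib

/-- The digamma function `ψ(x) = (d/dx) log Γ(x)`. -/
noncomputable def digamma (x : ℝ) : ℝ := deriv (fun y => Real.log (Real.Gamma y)) x

/-- The trigamma function `ψ₁ = ψ'`. -/
noncomputable def trigamma : ℝ → ℝ := deriv digamma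

open Set Filter Topology Finset

namespace DigammaProof

/-- `S p x = ∑_{k≥0} 1/(x+k)^p`. -/
noncomputable def S (p : ℕ) (x : ℝ) : ℝ := ∑' k : ℕ, 1 / (x + k) ^ p

lemma add_nat_pos {x : ℝ} (hx : 0 < x) (k : ℕ) : 0 < x + k := by positivity

lemma summable_S {p : ℕ} (hp : 2 ≤ p) {x : ℝ} (hx : 0 < x) :
    Summable (fun k : ℕ => 1 / (x + k) ^ p) := by
  rw [← summable_nat_add_iff 1]
  have h1 : Summable (fun k : ℕ => 1 / ((k : ℝ) + 1) ^ 2) := by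
    have := (Real.summable_one_div_nat_pow (p := 2)).mpr one_lt_two
    exact (summable_nat_add_iff 1).mpr this |>.congr (fun k => by push_cast; ring_nf)
  refine h1.of_nonneg_of_le (fun k => by positivity) (fun k => ?_)
  have hk1 : (1 : ℝ) ≤ (k : ℝ) + 1 := by have := Nat.cast_nonneg (α := ℝ) k; linarith
  have hxk : (k : ℝ) + 1 ≤ x + (k + 1 : ℕ) := by push_cast; linarith
  have h2 : ((k : ℝ) + 1) ^ 2 ≤ (x + (k + 1 : ℕ)) ^ p := by
    calc ((k : ℝ) + 1) ^ 2 ≤ (x + (k + 1 : ℕ)) ^ 2 := by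
          apply pow_le_pow_left₀ (by positivity) hxk
      _ ≤ (x + (k + 1 : ℕ)) ^ p := by
          apply pow_le_pow_right₀ (by push_cast; linarith) hp
  exact one_div_le_one_div_of_le (by positivity) h2

/-- Termwise differentiation of series on `(0,∞)`. -/
lemma hasDerivAt_tsum_Ioi (f f' : ℕ → ℝ → ℝ)
    (hder : ∀ k, ∀ x ∈ Ioi (0:ℝ), HasDerivAt (f k) (f' k x) x)
    (hsum : ∀ x ∈ Ioi (0:ℝ), Summable (fun k => f k x))
    (hbd : ∀ a : ℝ, 0 < a → ∃ u : ℕ → ℝ, Summable u ∧ ∀ k, ∀ x ∈ Icc a (1/a), |f' k x| ≤ u k)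
    {x : ℝ} (hx : 0 < x) :
    HasDerivAt (fun y => ∑' k, f k y) (∑' k, f' k x) x := by
  apply hasDerivAt_of_tendstoLocallyUniformlyOn (l := (atTop : Filter ℕ)) (f := fun (N : ℕ) y => ∑ k ∈ range N, f k y)
    (f' := fun (N : ℕ) y => ∑ k ∈ range N, f' k y) (isOpen_Ioi (a := (0:ℝ)))
    ?_ ?_ ?_ (mem_Ioi.mpr hx)
  · rw [tendstoLocallyUniformlyOn_iff_forall_isCompact isOpen_Ioi]
    intro K hK hKc
    rcases K.eq_empty_or_nonempty with rfl | hne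
    · simp [TendstoUniformlyOn]
    obtain ⟨a, haK, ha⟩ := hKc.exists_isLeast hne
    obtain ⟨b, hbK, hb⟩ := hKc.exists_isGreatest hne
    have ha0 : 0 < a := hK haK
    set a' : ℝ := min a (1/b)
    have hb0 : 0 < b := hK hbK
    have ha'0 : 0 < a' := lt_min ha0 (by positivity)
    have hKsub : K ⊆ Icc a' (1/a') := by
      intro y hy
      constructor
      · exact le_trans (min_le_left _ _) (ha hy)
      · refine le_trans (hb hy) ?_
        have h1 : a' ≤ 1 / b := min_le_right _ _
        calc b = 1 / (1 / b) := by rw [one_div_one_div]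
          _ ≤ 1 / a' := one_div_le_one_div_of_le ha'0 h1
    obtain ⟨u, hu, hub⟩ := hbd a' ha'0
    exact tendstoUniformlyOn_tsum_nat hu
      (fun k y hy => by rw [Real.norm_eq_abs]; exact hub k y (hKsub hy))
  · filter_upwards with N y hy
    exact HasDerivAt.fun_sum (fun k _ => hder k y hy)
  · intro y hy
    exact (hsum y hy).hasSum.tendsto_sum_nat

end DigammaProof

namespace DigammaProof

lemma hasDerivAt_term (p : ℕ) (k : ℕ) {x : ℝ} (hx : 0 < x) :
    HasDerivAt (fun y : ℝ => 1 / (y + k) ^ p) (-(p : ℝ) * (1 / (x + k) ^ (p + 1))) x := by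
  have hxk : (0:ℝ) < x + k := by positivity
  have h1 : HasDerivAt (fun y : ℝ => (y + k) ^ p) ((p : ℝ) * (x + k) ^ (p - 1)) x := by
    simpa using ((hasDerivAt_id x).add_const (k : ℝ)).fun_pow p
  have h2 := h1.fun_inv (by positivity)
  rcases Nat.eq_zero_or_pos p with rfl | hp
  · simpa using hasDerivAt_const x (1 : ℝ)
  have h3 : -((p : ℝ) * (x + k) ^ (p - 1)) / ((x + k) ^ p) ^ 2
      = -(p : ℝ) * (1 / (x + k) ^ (p + 1)) := by
    have hpow : (x + k) ^ (p - 1) * (x + k) ^ (p + 1) = ((x + k) ^ p) ^ 2 := by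
      rw [← pow_add, ← pow_mul]
      congr 1
      omega
    field_simp
    nlinarith [hpow]
  simpa [one_div, h3] using h2

lemma hasDerivAt_S {p : ℕ} (hp : 2 ≤ p) {x : ℝ} (hx : 0 < x) :
    HasDerivAt (S p) (-(p : ℝ) * S (p + 1) x) x := by
  have h : HasDerivAt (fun y : ℝ => ∑' k : ℕ, 1 / (y + k) ^ p)
      (∑' k : ℕ, -(p : ℝ) * (1 / (x + k) ^ (p + 1))) x := by
    refine hasDerivAt_tsum_Ioi (fun k (y : ℝ) => 1 / (y + k) ^ p)
      (fun k (y : ℝ) => -(p : ℝ) * (1 / (y + k) ^ (p + 1)))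
      (fun k y hy => hasDerivAt_term p k hy) (fun y hy => summable_S hp hy) ?_ hx
    intro a ha
    refine ⟨fun k => (p : ℝ) * (1 / (a + k) ^ (p + 1)), (summable_S (by omega) ha).mul_left _,
        fun k y hy => ?_⟩
    have hyk : (0:ℝ) < y + k := by have h1 := hy.1; have h2 := Nat.cast_nonneg (α := ℝ) k; linarith
    have hak : (0:ℝ) < a + k := by positivity
    rw [abs_mul, abs_neg, abs_of_nonneg (by positivity : (0:ℝ) ≤ (p:ℝ)),
      abs_of_nonneg (by positivity : (0:ℝ) ≤ 1 / (y + k) ^ (p+1))]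
    have : (a + k) ^ (p+1) ≤ (y + k) ^ (p+1) :=
      pow_le_pow_left₀ hak.le (by linarith [hy.1]) _
    exact mul_le_mul_of_nonneg_left (one_div_le_one_div_of_le (by positivity) this)
      (by positivity)
  rw [tsum_mul_left] at h
  exact h

lemma S_pos {p : ℕ} (hp : 2 ≤ p) {x : ℝ} (hx : 0 < x) : 0 < S p x := by
  refine Summable.tsum_pos (summable_S hp hx) (fun k => by positivity) 0 ?_
  have : (0:ℝ) < x + (0:ℕ) := by positivity
  positivity

lemma sq_S3_le {x : ℝ} (hx : 0 < x) : S 3 x ^ 2 ≤ S 2 x * S 4 x := by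
  have h2 := summable_S (le_refl 2) hx
  have h4 := summable_S (by norm_num : 2 ≤ 4) hx
  have key : ∀ s : Finset ℕ, (∑ k ∈ s, 1 / (x + k) ^ 3) ^ 2 ≤ S 2 x * S 4 x := by
    intro s
    have cs := Finset.sum_mul_sq_le_sq_mul_sq s (fun k => 1 / (x + k)) (fun k => 1 / (x + k) ^ 2)
    have e1 : ∀ k : ℕ, (1 / (x + (k:ℝ))) * (1 / (x + k) ^ 2) = 1 / (x + k) ^ 3 := by
      intro k; rw [div_mul_div_comm, one_mul, ← pow_succ']
    have e2 : ∀ k : ℕ, (1 / (x + (k:ℝ))) ^ 2 = 1 / (x + k) ^ 2 := fun k => by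
      rw [div_pow, one_pow]
    have e3 : ∀ k : ℕ, ((1:ℝ) / (x + (k:ℝ)) ^ 2) ^ 2 = 1 / (x + k) ^ 4 := fun k => by
      rw [div_pow, one_pow, ← pow_mul]
    simp only [e1, e2, e3] at cs
    refine cs.trans (mul_le_mul ?_ ?_ ?_ ?_)
    · exact Summable.sum_le_tsum s (fun k _ => by positivity) h2
    · exact Summable.sum_le_tsum s (fun k _ => by positivity) h4
    · exact Finset.sum_nonneg fun k _ => by positivity
    · exact (S_pos (le_refl 2) hx).le
  have h3 := summable_S (by norm_num : 2 ≤ 3) hx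
  have ht : Tendsto (fun s : Finset ℕ => (∑ k ∈ s, 1 / (x + k) ^ 3) ^ 2) atTop
      (𝓝 (S 3 x ^ 2)) := by
    exact (continuous_pow 2).continuousAt.tendsto.comp h3.hasSum
  exact le_of_tendsto ht (Filter.Eventually.of_forall key)

end DigammaProof

namespace DigammaProof

open Real

lemma summable_base {x : ℝ} (hx : 0 < x) :
    Summable (fun k : ℕ => x * (1 / ((k : ℝ) + 1) ^ 2)) := by
  have h1 : Summable (fun k : ℕ => 1 / ((k : ℝ) + 1) ^ 2) := by
    have := (Real.summable_one_div_nat_pow (p := 2)).mpr one_lt_two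
    exact ((summable_nat_add_iff 1).mpr this).congr (fun k => by push_cast; ring_nf)
  exact h1.mul_left x

lemma term_eq {x : ℝ} (hx : 0 < x) (k : ℕ) :
    1 / ((k : ℝ) + 1) - 1 / (x + k + 1) = x / (((k : ℝ) + 1) * (x + k + 1)) := by
  have h1 : ((k : ℝ) + 1) ≠ 0 := by positivity
  have h2 : (x + (k : ℝ) + 1) ≠ 0 := by positivity
  field_simp
  ring

lemma term_nonneg {x : ℝ} (hx : 0 < x) (k : ℕ) :
    0 ≤ 1 / ((k : ℝ) + 1) - 1 / (x + k + 1) := by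
  rw [term_eq hx k]
  positivity

lemma term_le {x : ℝ} (hx : 0 < x) (k : ℕ) :
    1 / ((k : ℝ) + 1) - 1 / (x + k + 1) ≤ x * (1 / ((k : ℝ) + 1) ^ 2) := by
  rw [term_eq hx k]
  rw [div_le_iff₀ (by positivity)]
  have hk : ((k : ℝ) + 1) ≤ x + k + 1 := by linarith
  have h2 : ((k : ℝ) + 1) ^ 2 ≤ ((k : ℝ) + 1) * (x + k + 1) := by nlinarith
  calc x = x * (1 / (((k:ℝ)+1) * (x + k + 1))) * (((k:ℝ)+1) * (x + k + 1)) := by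
        field_simp
    _ ≤ x * (1 / ((k : ℝ) + 1) ^ 2) * (((k:ℝ)+1) * (x + k + 1)) := by
        apply mul_le_mul_of_nonneg_right _ (by positivity)
        apply mul_le_mul_of_nonneg_left _ hx.le
        exact one_div_le_one_div_of_le (by positivity) h2
  
lemma summable_term {x : ℝ} (hx : 0 < x) :
    Summable (fun k : ℕ => 1 / ((k : ℝ) + 1) - 1 / (x + k + 1)) :=
  (summable_base hx).of_nonneg_of_le (term_nonneg hx) (term_le hx)

/-- Candidate digamma function. -/
noncomputable def G : ℝ → ℝ := fun x =>
  -eulerMascheroniConstant + -(1 / x) + ∑' k : ℕ, (1 / ((k : ℝ) + 1) - 1 / (x + k + 1))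

/-- partial-sum approximations to `log ∘ Gamma` -/
noncomputable def L (n : ℕ) (y : ℝ) : ℝ :=
  y * Real.log n + Real.log (n.factorial) - ∑ j ∈ Finset.range (n + 1), Real.log (y + j)

noncomputable def D (n : ℕ) (y : ℝ) : ℝ :=
  Real.log n - ∑ j ∈ Finset.range (n + 1), 1 / (y + j)

lemma hasDerivAt_L (n : ℕ) {y : ℝ} (hy : 0 < y) : HasDerivAt (L n) (D n y) y := by
  have h1 : HasDerivAt (fun z : ℝ => z * Real.log n + Real.log (n.factorial)) (Real.log n) y := by
    simpa using (hasDerivAt_mul_const (Real.log n)).add_const (Real.log (n.factorial))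
  have h2 : HasDerivAt (fun z : ℝ => ∑ j ∈ Finset.range (n + 1), Real.log (z + j))
      (∑ j ∈ Finset.range (n + 1), 1 / (y + j)) y := by
    apply HasDerivAt.fun_sum
    intro j _
    have hyj : y + (j : ℝ) ≠ 0 := by positivity
    simpa [one_div] using (Real.hasDerivAt_log hyj).comp_add_const y j
  exact h1.sub h2

lemma D_eq (n : ℕ) (y : ℝ) :
    D n y = (Real.log n - ∑ k ∈ Finset.range n, 1 / ((k : ℝ) + 1)) + -(1 / y)
      + ∑ k ∈ Finset.range n, (1 / ((k : ℝ) + 1) - 1 / (y + k + 1)) := by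
  have h1 : ∑ j ∈ Finset.range (n + 1), 1 / (y + (j:ℝ))
      = (∑ k ∈ Finset.range n, 1 / (y + k + 1)) + 1 / y := by
    rw [Finset.sum_range_succ' (fun j => 1 / (y + (j:ℝ))) n]
    simp only [Nat.cast_zero, add_zero, Nat.cast_add, Nat.cast_one]
    congr 1
    exact Finset.sum_congr rfl fun k _ => by rw [add_assoc]
  rw [D, h1, Finset.sum_sub_distrib]
  ring

lemma harmonic_real (n : ℕ) :
    ((harmonic n : ℚ) : ℝ) = ∑ k ∈ Finset.range n, 1 / ((k : ℝ) + 1) := by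
  rw [harmonic]
  push_cast
  simp [one_div]

lemma tendsto_eps :
    Tendsto (fun n : ℕ => Real.log n - ∑ k ∈ Finset.range n, 1 / ((k : ℝ) + 1)) atTop
      (𝓝 (-eulerMascheroniConstant)) := by
  have h := (Real.tendsto_harmonic_sub_log).neg
  apply h.congr
  intro n
  rw [harmonic_real]
  ring

end DigammaProof

namespace DigammaProof

open Real

lemma L_eq_log_GammaSeq {x : ℝ} (hx : 0 < x) {n : ℕ} (hn : 1 ≤ n) :
    Real.log (Real.GammaSeq x n) = L n x := by
  have hn0 : (0:ℝ) < n := by exact_mod_cast hn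
  have hfac : ((n.factorial : ℝ)) ≠ 0 := by
    exact_mod_cast n.factorial_ne_zero
  have hprod_pos : ∀ j ∈ Finset.range (n + 1), (x + (j:ℝ)) ≠ 0 := by
    intro j _
    positivity
  have hprod : (∏ j ∈ Finset.range (n + 1), (x + (j:ℝ))) ≠ 0 :=
    Finset.prod_ne_zero_iff.mpr hprod_pos
  rw [Real.GammaSeq, Real.log_div (by positivity) hprod, Real.log_mul (by positivity) hfac,
    Real.log_rpow hn0, Real.log_prod hprod_pos, L]

lemma tendsto_L {x : ℝ} (hx : 0 < x) :
    Tendsto (fun n => L n x) atTop (𝓝 (Real.log (Real.Gamma x))) := by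
  have h1 : Tendsto (fun n => Real.log (Real.GammaSeq x n)) atTop
      (𝓝 (Real.log (Real.Gamma x))) :=
    ((Real.continuousAt_log (Real.Gamma_pos_of_pos hx).ne').tendsto).comp
      (Real.GammaSeq_tendsto_Gamma x)
  apply h1.congr'
  filter_upwards [eventually_ge_atTop 1] with n hn
  exact L_eq_log_GammaSeq hx hn

lemma tendstoLocallyUniformlyOn_D :
    TendstoLocallyUniformlyOn D G atTop (Ioi (0:ℝ)) := by
  rw [tendstoLocallyUniformlyOn_iff_forall_isCompact isOpen_Ioi]
  intro K hK hKc
  rcases K.eq_empty_or_nonempty with rfl | hne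
  · simp [TendstoUniformlyOn]
  obtain ⟨a, haK, ha⟩ := hKc.exists_isLeast hne
  obtain ⟨b, hbK, hb⟩ := hKc.exists_isGreatest hne
  have ha0 : 0 < a := hK haK
  have hb0 : 0 < b := hK hbK
  -- piece A : constants
  have hA : TendstoUniformlyOn
      (fun (n : ℕ) (_ : ℝ) => Real.log n - ∑ k ∈ Finset.range n, 1 / ((k : ℝ) + 1))
      (fun _ => -eulerMascheroniConstant) atTop K := by
    rw [Metric.tendstoUniformlyOn_iff]
    intro δ hδ
    filter_upwards [Metric.tendsto_nhds.mp tendsto_eps δ hδ] with n hn y _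
    rw [dist_comm]
    exact hn
  -- piece B : fixed function
  have hB : TendstoUniformlyOn (fun (_ : ℕ) (y : ℝ) => -(1 / y)) (fun y => -(1 / y)) atTop K := by
    rw [Metric.tendstoUniformlyOn_iff]
    intro δ hδ
    filter_upwards with n y _
    simpa using hδ
  -- piece C : series
  have hC : TendstoUniformlyOn
      (fun (n : ℕ) (y : ℝ) => ∑ k ∈ Finset.range n, (1 / ((k : ℝ) + 1) - 1 / (y + k + 1)))
      (fun y => ∑' k : ℕ, (1 / ((k : ℝ) + 1) - 1 / (y + k + 1))) atTop K := by
    apply tendstoUniformlyOn_tsum_nat (u := fun k => b * (1 / ((k : ℝ) + 1) ^ 2))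
      (summable_base hb0)
    intro k y hy
    have hy0 : 0 < y := hK hy
    rw [Real.norm_eq_abs, abs_of_nonneg (term_nonneg hy0 k)]
    calc 1 / ((k : ℝ) + 1) - 1 / (y + k + 1) ≤ y * (1 / ((k : ℝ) + 1) ^ 2) := term_le hy0 k
      _ ≤ b * (1 / ((k : ℝ) + 1) ^ 2) := by
          apply mul_le_mul_of_nonneg_right (hb hy) (by positivity)
  have := (hA.add hB).add hC
  apply this.congr
  filter_upwards with n y hy
  exact (D_eq n y).symm

lemma hasDerivAt_logGamma {x : ℝ} (hx : 0 < x) :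
    HasDerivAt (fun y => Real.log (Real.Gamma y)) (G x) x := by
  apply hasDerivAt_of_tendstoLocallyUniformlyOn (l := (atTop : Filter ℕ)) (f := L) (f' := D)
    isOpen_Ioi tendstoLocallyUniformlyOn_D ?_ ?_ (mem_Ioi.mpr hx)
  · filter_upwards with n y hy
    exact hasDerivAt_L n hy
  · intro y hy
    exact tendsto_L hy

lemma digamma_eq {x : ℝ} (hx : 0 < x) : digamma x = G x :=
  (hasDerivAt_logGamma hx).deriv

lemma hasDerivAt_G {x : ℝ} (hx : 0 < x) : HasDerivAt G (S 2 x) x := by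
  have h1 : HasDerivAt (fun y : ℝ => -eulerMascheroniConstant + -(1 / y)) ((x ^ 2)⁻¹) x := by
    have := (hasDerivAt_inv hx.ne').neg.const_add (-eulerMascheroniConstant)
    simpa [one_div] using this
  have h2 : HasDerivAt (fun y : ℝ => ∑' k : ℕ, (1 / ((k : ℝ) + 1) - 1 / (y + k + 1)))
      (∑' k : ℕ, 1 / (x + k + 1) ^ 2) x := by
    refine hasDerivAt_tsum_Ioi (fun k (y : ℝ) => 1 / ((k : ℝ) + 1) - 1 / (y + k + 1))
      (fun k (y : ℝ) => 1 / (y + k + 1) ^ 2) ?_ (fun y hy => summable_term hy) ?_ hx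
    · intro k y hy
      have hy0 : (0:ℝ) < y := hy
      have hne : y + ((k:ℝ) + 1) ≠ 0 := by positivity
      have h := ((hasDerivAt_inv hne).comp_add_const y ((k:ℝ)+1)).const_sub (1 / ((k : ℝ) + 1))
      simpa [one_div, add_assoc] using h
    · intro a ha
      have hsum : Summable (fun k : ℕ => 1 / (a + (k:ℝ) + 1) ^ 2) := by
        apply ((summable_nat_add_iff 1).mpr (summable_S (le_refl 2) ha)).congr
        intro k
        push_cast
        ring_nf
      refine ⟨fun k => 1 / (a + (k:ℝ) + 1) ^ 2, hsum, ?_⟩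
      intro k y hy
      have hy0 : a ≤ y := hy.1
      have hk : (0:ℝ) < a + (k:ℝ) + 1 := by positivity
      rw [abs_of_nonneg (by positivity)]
      apply one_div_le_one_div_of_le (by positivity)
      apply pow_le_pow_left₀ hk.le (by linarith) 2
  have h3 := h1.add h2
  have e4 : (x ^ 2)⁻¹ + ∑' k : ℕ, 1 / (x + (k:ℝ) + 1) ^ 2 = S 2 x := by
    rw [S, (summable_S (le_refl 2) hx).tsum_eq_zero_add]
    rw [Nat.cast_zero, add_zero, one_div]
    congr 1
    apply tsum_congr
    intro k
    push_cast
    ring_nf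
  rw [e4] at h3
  exact h3

end DigammaProof

namespace DigammaProof

open Real

lemma digamma_eventuallyEq {x : ℝ} (hx : 0 < x) : digamma =ᶠ[𝓝 x] G := by
  filter_upwards [Ioi_mem_nhds hx] with y hy
  exact digamma_eq hy

lemma hasDerivAt_digamma {x : ℝ} (hx : 0 < x) : HasDerivAt digamma (S 2 x) x :=
  (hasDerivAt_G hx).congr_of_eventuallyEq (digamma_eventuallyEq hx)

lemma trigamma_eq {x : ℝ} (hx : 0 < x) : trigamma x = S 2 x :=
  (hasDerivAt_digamma hx).deriv

/-- logarithmic derivative of trigamma -/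
noncomputable def uu : ℝ → ℝ := fun x => -2 * S 3 x / S 2 x

lemma hasDerivAt_S2 {x : ℝ} (hx : 0 < x) : HasDerivAt (S 2) (-2 * S 3 x) x := by
  have := hasDerivAt_S (le_refl 2) hx
  norm_num [neg_mul] at this ⊢
  exact this

lemma hasDerivAt_S3 {x : ℝ} (hx : 0 < x) : HasDerivAt (S 3) (-3 * S 4 x) x := by
  have := hasDerivAt_S (by norm_num : 2 ≤ 3) hx
  norm_num [neg_mul] at this ⊢
  exact this

lemma hasDerivAt_uu {x : ℝ} (hx : 0 < x) :
    HasDerivAt uu ((6 * S 4 x * S 2 x - 4 * S 3 x ^ 2) / (S 2 x) ^ 2) x := by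
  have hN : HasDerivAt (fun y => -2 * S 3 y) (-2 * (-3 * S 4 x)) x :=
    (hasDerivAt_S3 hx).const_mul (-2)
  have := hN.fun_div (hasDerivAt_S2 hx) (S_pos (le_refl 2) hx).ne'
  have e : (6 * S 4 x * S 2 x - 4 * S 3 x ^ 2) / (S 2 x) ^ 2
      = (-2 * (-3 * S 4 x) * S 2 x - -2 * S 3 x * (-2 * S 3 x)) / S 2 x ^ 2 := by ring
  rw [e]
  exact this

lemma deriv_uu_pos {x : ℝ} (hx : 0 < x) : 0 < deriv uu x := by
  rw [(hasDerivAt_uu hx).deriv]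
  have h1 := sq_S3_le hx
  have h2 := S_pos (le_refl 2) hx
  have h4 := S_pos (by norm_num : 2 ≤ 4) hx
  apply div_pos _ (by positivity)
  nlinarith

lemma strictMonoOn_uu : StrictMonoOn uu (Ioi (0:ℝ)) := by
  apply strictMonoOn_of_deriv_pos (convex_Ioi 0)
  · exact fun x hx => (hasDerivAt_uu hx).continuousAt.continuousWithinAt
  · rw [interior_Ioi]
    exact fun x hx => deriv_uu_pos hx

lemma hasDerivAt_logS2 {x : ℝ} (hx : 0 < x) :
    HasDerivAt (fun y => Real.log (S 2 y)) (uu x) x :=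
  (hasDerivAt_S2 hx).log (S_pos (le_refl 2) hx).ne'

lemma ratio_strictAnti {γ : ℝ} (hγ : 0 < γ) :
    StrictAntiOn (fun z => Real.log (S 2 z) - Real.log (S 2 (z + γ))) (Ioi (0:ℝ)) := by
  have key : ∀ x ∈ Ioi (0:ℝ), HasDerivAt (fun z => Real.log (S 2 z) - Real.log (S 2 (z + γ)))
      (uu x - uu (x + γ)) x := by
    intro x hx
    have hx0 : (0:ℝ) < x := hx
    have h1 := hasDerivAt_logS2 hx0
    have h2 := (hasDerivAt_logS2 (by linarith : (0:ℝ) < x + γ)).comp_add_const x γ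
    exact h1.sub h2
  apply strictAntiOn_of_deriv_neg (convex_Ioi 0)
  · exact fun x hx => (key x hx).continuousAt.continuousWithinAt
  · rw [interior_Ioi]
    intro x hx
    rw [(key x hx).deriv]
    have hx0 : (0:ℝ) < x := hx
    have := strictMonoOn_uu hx0 (by simp; linarith : x + γ ∈ Ioi (0:ℝ)) (by linarith)
    linarith

end DigammaProof

open Set Filter Topology DigammaProof

theorem inf_attained_at_critical_point (c : ℝ) (hc : 1 < c) :
    ∃ γstar > (0 : ℝ), ∀ γ : ℝ, 0 < γ → γ < γstar →
      ∀ z : ℝ, 0 < z → trigamma z = c * trigamma (z + γ) →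
        (∀ x : ℝ, 0 < x →
          c * digamma (z + γ) - digamma z ≤ c * digamma (x + γ) - digamma x) ∧
        (∀ x : ℝ, 0 < x →
          c * digamma (x + γ) - digamma x = c * digamma (z + γ) - digamma z → x = z) ∧
        sInf {y : ℝ | ∃ x : ℝ, 0 < x ∧ y = c * digamma (x + γ) - digamma x}
          = c * digamma (z + γ) - digamma z := by
  refine ⟨1, one_pos, fun γ hγ _ z hz heq => ?_⟩
  have hzγ : 0 < z + γ := by linarith
  have c0 : (0:ℝ) < c := by linarith
  have heq' : S 2 z = c * S 2 (z + γ) := by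
    rw [← trigamma_eq hz, ← trigamma_eq hzγ]; exact heq
  set f : ℝ → ℝ := fun x => c * digamma (x + γ) - digamma x with hf
  have hderiv : ∀ x : ℝ, 0 < x → HasDerivAt f (c * S 2 (x + γ) - S 2 x) x := by
    intro x hx
    exact (((hasDerivAt_digamma (by linarith)).comp_add_const x γ).const_mul c).sub
      (hasDerivAt_digamma hx)
  have elog : Real.log (S 2 z) - Real.log (S 2 (z + γ)) = Real.log c := by
    rw [heq', Real.log_mul (ne_of_gt c0) (S_pos (le_refl 2) hzγ).ne']; ring
  have hratio : ∀ x : ℝ, 0 < x → x < z → c * S 2 (x + γ) < S 2 x := by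
    intro x hx hxz
    have h0 := ratio_strictAnti hγ (mem_Ioi.mpr hx) (mem_Ioi.mpr hz) hxz
    have h : Real.log (S 2 z) - Real.log (S 2 (z + γ))
        < Real.log (S 2 x) - Real.log (S 2 (x + γ)) := h0
    rw [elog] at h
    have h2 : Real.log (c * S 2 (x + γ)) < Real.log (S 2 x) := by
      rw [Real.log_mul (ne_of_gt c0) (S_pos (le_refl 2) (by linarith)).ne']
      linarith
    have hp : (0:ℝ) < c * S 2 (x + γ) := by
      have := S_pos (le_refl 2) (by linarith : (0:ℝ) < x + γ); positivity
    exact (Real.log_lt_log_iff hp (S_pos (le_refl 2) hx)).mp h2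
  have hratio' : ∀ x : ℝ, z < x → S 2 x < c * S 2 (x + γ) := by
    intro x hxz
    have hx : 0 < x := lt_trans hz hxz
    have h0 := ratio_strictAnti hγ (mem_Ioi.mpr hz) (mem_Ioi.mpr hx) hxz
    have h : Real.log (S 2 x) - Real.log (S 2 (x + γ))
        < Real.log (S 2 z) - Real.log (S 2 (z + γ)) := h0
    rw [elog] at h
    have h2 : Real.log (S 2 x) < Real.log (c * S 2 (x + γ)) := by
      rw [Real.log_mul (ne_of_gt c0) (S_pos (le_refl 2) (by linarith)).ne']
      linarith
    have hp : (0:ℝ) < c * S 2 (x + γ) := by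
      have := S_pos (le_refl 2) (by linarith : (0:ℝ) < x + γ); positivity
    exact (Real.log_lt_log_iff (S_pos (le_refl 2) hx) hp).mp h2
  have hanti : StrictAntiOn f (Ioc 0 z) := by
    apply strictAntiOn_of_deriv_neg (convex_Ioc 0 z)
    · exact fun x hx => (hderiv x hx.1).continuousAt.continuousWithinAt
    · rw [interior_Ioc]
      intro x hx
      rw [(hderiv x hx.1).deriv]
      have := hratio x hx.1 hx.2
      linarith
  have hmono : StrictMonoOn f (Ici z) := by
    apply strictMonoOn_of_deriv_pos (convex_Ici z)
    · exact fun x hx => (hderiv x (lt_of_lt_of_le hz hx)).continuousAt.continuousWithinAt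
    · rw [interior_Ici]
      intro x hx
      rw [(hderiv x (lt_trans hz hx)).deriv]
      have := hratio' x hx
      linarith
  have hmin : ∀ x : ℝ, 0 < x → x ≠ z → f z < f x := by
    intro x hx hne
    rcases lt_or_gt_of_ne hne with h | h
    · exact hanti (mem_Ioc.mpr ⟨hx, h.le⟩) (mem_Ioc.mpr ⟨hz, le_refl z⟩) h
    · exact hmono (mem_Ici.mpr (le_refl z)) (mem_Ici.mpr h.le) h
  have hmin' : ∀ x : ℝ, 0 < x → x ≠ z →
      c * digamma (z + γ) - digamma z < c * digamma (x + γ) - digamma x := by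
    intro x hx hne
    simpa only [hf] using hmin x hx hne
  have hle : ∀ x : ℝ, 0 < x →
      c * digamma (z + γ) - digamma z ≤ c * digamma (x + γ) - digamma x := by
    intro x hx
    rcases eq_or_ne x z with rfl | hne
    · exact le_refl _
    · exact (hmin' x hx hne).le
  refine ⟨hle, ?_, ?_⟩
  · intro x hx hfeq
    by_contra hne
    exact (ne_of_gt (hmin' x hx hne)) hfeq
  · apply IsLeast.csInf_eq
    exact ⟨⟨z, hz, rfl⟩, by rintro y ⟨x, hx, rfl⟩; exact hle x hx⟩
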